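/- For every n×n complex matrix ρ and all k, ν ∈ ℝ, Tr(L_{k,k+ν}(ρ)) = e^{iν}·Tr(ρ) − 2i·sin(ν)·Tr(B₂*B₂ρ). In particular the trace of L_{k,k+ν}(ρ) does not depend on p, and L_{k,k} is trace-preserving. -/
import Mathlib

open Matrix Complex

/-- With the POQRW superoperator
`L_{k,k'}(ρ) = p(e^{i(k'−k)}B₁ρB₁* + e^{−i(k'−k)}B₂ρB₂*) + q·U_kρU_{k'}*`,
for every `n×n` matrix `ρ` and all `k, ν ∈ ℝ`:
`Tr(L_{k,k+ν}(ρ)) = e^{iν}·Tr(ρ) − 2i·sin(ν)·Tr(B₂*B₂ρ)` (a formula independent of `p`),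
and `L_{k,k}` is trace-preserving. -/
theorem stmt10 {n n₁ : ℕ} (hn₁ : 1 ≤ n₁) (hn : n₁ < n) (n₂ : ℕ) (hn₂ : n₂ = n - n₁)
    (U : Matrix (Fin n) (Fin n) ℂ) (hU : U ∈ Matrix.unitaryGroup (Fin n) ℂ)
    (p q : ℝ) (hp0 : 0 ≤ p) (hp1 : p ≤ 1) (hq : q = 1 - p)
    (P1 P2 B1 B2 : Matrix (Fin n) (Fin n) ℂ)
    (hP1 : P1 = Matrix.diagonal (fun i : Fin n => if (i : ℕ) < n₁ then (1 : ℂ) else 0))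
    (hP2 : P2 = 1 - P1) (hB1 : B1 = P1 * U) (hB2 : B2 = P2 * U)
    (Uk : ℝ → Matrix (Fin n) (Fin n) ℂ)
    (hUk : ∀ k : ℝ, Uk k = Complex.exp (-Complex.I * k) • B1 + Complex.exp (Complex.I * k) • B2)
    (Lsup : ℝ → ℝ → Matrix (Fin n) (Fin n) ℂ → Matrix (Fin n) (Fin n) ℂ)
    (hLsup : ∀ (k k' : ℝ) ρ, Lsup k k' ρ =
      (p : ℂ) • (Complex.exp (Complex.I * ((k' : ℂ) - (k : ℂ))) • (B1 * ρ * B1ᴴ) +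
        Complex.exp (-Complex.I * ((k' : ℂ) - (k : ℂ))) • (B2 * ρ * B2ᴴ)) +
      (q : ℂ) • (Uk k * ρ * (Uk k')ᴴ)) :
    ∀ (ρ : Matrix (Fin n) (Fin n) ℂ) (k ν : ℝ),
      (Lsup k (k + ν) ρ).trace =
        Complex.exp (Complex.I * ν) * ρ.trace -
          2 * Complex.I * (Real.sin ν : ℂ) * (B2ᴴ * B2 * ρ).trace ∧
      (Lsup k k ρ).trace = ρ.trace := by
  intro ρ k ν
  have hP1H : P1ᴴ = P1 := by
    have h : (star fun i : Fin n => if (i : ℕ) < n₁ then (1 : ℂ) else 0) =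
        fun i : Fin n => if (i : ℕ) < n₁ then (1 : ℂ) else 0 := by
      funext i; by_cases h : (i : ℕ) < n₁ <;> simp [h]
    rw [hP1, Matrix.diagonal_conjTranspose, h]
  have hP11 : P1 * P1 = P1 := by
    have h : (fun i : Fin n => (if (i : ℕ) < n₁ then (1 : ℂ) else 0) *
        (if (i : ℕ) < n₁ then (1 : ℂ) else 0)) =
        fun i : Fin n => if (i : ℕ) < n₁ then (1 : ℂ) else 0 := by
      funext i; by_cases h : (i : ℕ) < n₁ <;> simp [h]
    rw [hP1, Matrix.diagonal_mul_diagonal, h]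
  have hP2H : P2ᴴ = P2 := by rw [hP2, conjTranspose_sub, conjTranspose_one, hP1H]
  have hB1H : B1ᴴ = Uᴴ * P1 := by rw [hB1, conjTranspose_mul, hP1H]
  have hB2H : B2ᴴ = Uᴴ * P2 := by rw [hB2, conjTranspose_mul, hP2H]
  have hUU : Uᴴ * U = 1 := by
    have := (Matrix.mem_unitaryGroup_iff'.mp hU)
    rwa [Matrix.star_eq_conjTranspose] at this
  have hP21 : P2 * P1 = 0 := by
    rw [hP2, sub_mul, one_mul, hP11, sub_self]
  have hP12 : P1 * P2 = 0 := by
    rw [hP2, mul_sub, mul_one, hP11, sub_self]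
  have hP22 : P2 * P2 = P2 := by
    nth_rewrite 1 [hP2]
    rw [sub_mul, one_mul, hP12, sub_zero]
  have h21 : B2ᴴ * B1 = 0 := by
    rw [hB2H, hB1, Matrix.mul_assoc, ← Matrix.mul_assoc P2 P1 U, hP21, Matrix.zero_mul,
      Matrix.mul_zero]
  have h12 : B1ᴴ * B2 = 0 := by
    rw [hB1H, hB2, Matrix.mul_assoc, ← Matrix.mul_assoc P1 P2 U, hP12, Matrix.zero_mul,
      Matrix.mul_zero]
  have h11 : B1ᴴ * B1 = Uᴴ * P1 * U := by
    rw [hB1H, hB1, Matrix.mul_assoc, ← Matrix.mul_assoc P1 P1 U, hP11, ← Matrix.mul_assoc]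
  have h22 : B2ᴴ * B2 = Uᴴ * P2 * U := by
    rw [hB2H, hB2, Matrix.mul_assoc, ← Matrix.mul_assoc P2 P2 U, hP22, ← Matrix.mul_assoc]
  have hsum : B1ᴴ * B1 = 1 - B2ᴴ * B2 := by
    rw [h11, h22]
    have h : Uᴴ * P1 * U + Uᴴ * P2 * U = 1 := by
      rw [hP2]
      have h2 : Uᴴ * P1 * U + Uᴴ * (1 - P1) * U = Uᴴ * U := by noncomm_ring
      rw [h2, hUU]
    linear_combination (norm := noncomm_ring) h
  -- trace facts
  have t1 : (B1 * ρ * B1ᴴ).trace = ρ.trace - (B2ᴴ * B2 * ρ).trace := by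
    rw [Matrix.trace_mul_cycle, hsum, Matrix.sub_mul, Matrix.one_mul, Matrix.trace_sub]
  have t2 : (B2 * ρ * B2ᴴ).trace = (B2ᴴ * B2 * ρ).trace := by
    rw [Matrix.trace_mul_cycle]
  have t3 : (B1 * ρ * B2ᴴ).trace = 0 := by
    rw [Matrix.trace_mul_cycle, h21, Matrix.zero_mul, Matrix.trace_zero]
  have t4 : (B2 * ρ * B1ᴴ).trace = 0 := by
    rw [Matrix.trace_mul_cycle, h12, Matrix.zero_mul, Matrix.trace_zero]
  have hconj : ∀ x : ℝ, (starRingEnd ℂ) (Complex.exp (Complex.I * x)) =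
      Complex.exp (-Complex.I * x) := by
    intro x
    rw [← Complex.exp_conj]
    congr 1
    simp [Complex.conj_ofReal]
  have hconj' : ∀ x : ℝ, (starRingEnd ℂ) (Complex.exp (-Complex.I * x)) =
      Complex.exp (Complex.I * x) := by
    intro x
    rw [← Complex.exp_conj]
    congr 1
    simp [Complex.conj_ofReal]
  have main : ∀ μ : ℝ, (Lsup k (k + μ) ρ).trace =
      Complex.exp (Complex.I * μ) * ρ.trace -
        2 * Complex.I * (Real.sin μ : ℂ) * (B2ᴴ * B2 * ρ).trace := by
    intro μ
    rw [hLsup, hUk, hUk]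
    simp only [conjTranspose_add, conjTranspose_smul, Complex.star_def, hconj, hconj',
      Matrix.add_mul, Matrix.mul_add, Matrix.smul_mul, Matrix.mul_smul,
      Matrix.trace_add, Matrix.trace_smul, smul_eq_mul, smul_add, smul_smul]
    rw [t1, t2, t3, t4]
    have hμ' : ((k + μ : ℝ) : ℂ) - (k : ℂ) = (μ : ℂ) := by push_cast; ring
    rw [hμ']
    have hsplit1 : Complex.exp (Complex.I * ((k + μ : ℝ) : ℂ)) =
        Complex.exp (Complex.I * (k : ℂ)) * Complex.exp (Complex.I * (μ : ℂ)) := by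
      rw [← Complex.exp_add]; push_cast; ring_nf
    have hsplit2 : Complex.exp (-Complex.I * ((k + μ : ℝ) : ℂ)) =
        Complex.exp (-Complex.I * (k : ℂ)) * Complex.exp (-Complex.I * (μ : ℂ)) := by
      rw [← Complex.exp_add]; push_cast; ring_nf
    have hnegk : Complex.exp (-Complex.I * (k : ℂ)) = (Complex.exp (Complex.I * (k : ℂ)))⁻¹ := by
      rw [neg_mul, Complex.exp_neg]
    have hnegμ : Complex.exp (-Complex.I * (μ : ℂ)) = (Complex.exp (Complex.I * (μ : ℂ)))⁻¹ := by
      rw [neg_mul, Complex.exp_neg]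
    have hsin : (Real.sin μ : ℂ) = (Complex.exp (-Complex.I * (μ : ℂ)) -
        Complex.exp (Complex.I * (μ : ℂ))) * Complex.I / 2 := by
      rw [Complex.ofReal_sin, Complex.sin]
      ring_nf
    rw [hsin, hq, hsplit1, hsplit2, hnegk, hnegμ]
    push_cast
    field_simp [Complex.exp_ne_zero]
    ring_nf
    simp only [Complex.I_sq]
    ring
  refine ⟨main ν, ?_⟩
  have h0 := main 0
  simpa using h0
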